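/- Let M, N be positive integers, h > 0, τ > 0, and μ, γ, κ, ν ∈ ℝ. Suppose the periodic grid functions u^k, v^k (0 ≤ k ≤ N) satisfy the compact scheme. Then the first-level energy identity holds: (1/2)·(‖u¹‖² + ‖u⁰‖²) + (μ/2)·[(|u¹|₁² + |u⁰|₁²) + (h²/12)·(‖v¹‖² + ‖v⁰‖²) − (h⁴/144)·(|v¹|₁² + |v⁰|₁²)] + ν·τ·(|u^{1/2}|₁² + (h²/12)·‖v^{1/2}‖² − (h⁴/144)·|v^{1/2}|₁²) = ‖u⁰‖² + μ·|u⁰|₁² + (μh²/12)·‖v⁰‖² − (μh⁴/144)·|v⁰|₁², where w^{1/2} = (w⁰ + w¹)/2. (Theorem 4.1, equation (21).) -/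

import Mathlib

open Finset

namespace BBMB

/-- A periodic grid function with period `M`. -/
def Periodic (M : ℕ) (u : ℤ → ℝ) : Prop := ∀ i : ℤ, u (i + (M : ℤ)) = u i

/-- Forward difference `δ_x u_{i+1/2} = (u_{i+1} - u_i)/h`. -/
noncomputable def dxp (h : ℝ) (u : ℤ → ℝ) (i : ℤ) : ℝ := (u (i + 1) - u i) / h

/-- Backward difference `δ_x u_{i-1/2} = (u_i - u_{i-1})/h`. -/
noncomputable def dxm (h : ℝ) (u : ℤ → ℝ) (i : ℤ) : ℝ := (u i - u (i - 1)) / h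

/-- Second difference `δ_x² u_i = (u_{i+1} - 2 u_i + u_{i-1})/h²`. -/
noncomputable def dxx (h : ℝ) (u : ℤ → ℝ) (i : ℤ) : ℝ :=
  (u (i + 1) - 2 * u i + u (i - 1)) / h ^ 2

/-- Centered difference `Δ_x u_i = (u_{i+1} - u_{i-1})/(2h)`. -/
noncomputable def Dx (h : ℝ) (u : ℤ → ℝ) (i : ℤ) : ℝ := (u (i + 1) - u (i - 1)) / (2 * h)

/-- Discrete inner product `(u, w) = h ∑_{i=1}^{M} u_i w_i`. -/
noncomputable def ip (M : ℕ) (h : ℝ) (u w : ℤ → ℝ) : ℝ :=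
  h * ∑ i ∈ Finset.Icc (1 : ℤ) (M : ℤ), u i * w i

/-- Discrete inner product `⟨δ_x u, δ_x w⟩ = h ∑_{i=1}^{M} (δ_x u_{i-1/2})(δ_x w_{i-1/2})`. -/
noncomputable def dip (M : ℕ) (h : ℝ) (u w : ℤ → ℝ) : ℝ :=
  h * ∑ i ∈ Finset.Icc (1 : ℤ) (M : ℤ), dxm h u i * dxm h w i

/-- Discrete `L²` norm `‖u‖ = √((u,u))`. -/
noncomputable def nrm (M : ℕ) (h : ℝ) (u : ℤ → ℝ) : ℝ := Real.sqrt (ip M h u u)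

/-- Discrete `H¹` seminorm `|u|₁ = √(⟨δ_x u, δ_x u⟩)`. -/
noncomputable def snorm (M : ℕ) (h : ℝ) (u : ℤ → ℝ) : ℝ := Real.sqrt (dip M h u u)

/-- Trilinear term `ψ(u,v)_i = (1/3) (u_i Δ_x v_i + Δ_x (u·v)_i)`. -/
noncomputable def psi (h : ℝ) (u v : ℤ → ℝ) (i : ℤ) : ℝ :=
  (1 / 3) * (u i * Dx h v i + Dx h (fun j => u j * v j) i)

/-- Average of two grid functions. -/
noncomputable def half (w0 w1 : ℤ → ℝ) : ℤ → ℝ := fun i => (w0 i + w1 i) / 2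

/-- The three-level linearized compact difference scheme (17)–(20a). -/
def SatisfiesScheme (M N : ℕ) (h τ μ γ κ ν : ℝ) (u v : ℕ → ℤ → ℝ) : Prop :=
  (∀ k ≤ N, Periodic M (u k) ∧ Periodic M (v k)) ∧
  (∀ k ≤ N, ∀ i : ℤ, v k i = dxx h (u k) i - h ^ 2 / 12 * dxx h (v k) i) ∧
  (∀ i : ℤ,
    (u 1 i - u 0 i) / τ - μ * (v 1 i - v 0 i) / τ
      + γ * (psi h (u 0) (half (u 0) (u 1)) i
             - h ^ 2 / 2 * psi h (v 0) (half (u 0) (u 1)) i)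
      + κ * (Dx h (half (u 0) (u 1)) i - h ^ 2 / 6 * Dx h (half (v 0) (v 1)) i)
      - ν * half (v 0) (v 1) i = 0) ∧
  (∀ k : ℕ, 1 ≤ k → k + 1 ≤ N → ∀ i : ℤ,
    (u (k + 1) i - u (k - 1) i) / (2 * τ) - μ * (v (k + 1) i - v (k - 1) i) / (2 * τ)
      + γ * (psi h (u k) (half (u (k - 1)) (u (k + 1))) i
             - h ^ 2 / 2 * psi h (v k) (half (u (k - 1)) (u (k + 1))) i)
      + κ * (Dx h (half (u (k - 1)) (u (k + 1))) i
             - h ^ 2 / 6 * Dx h (half (v (k - 1)) (v (k + 1))) i)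
      - ν * half (v (k - 1)) (v (k + 1)) i = 0)

variable {M : ℕ} {h : ℝ} {a b : ℤ → ℝ}

lemma sum_shift {M : ℕ} (f : ℤ → ℝ) (hf : Periodic M f) :
    ∑ i ∈ Finset.Icc (1:ℤ) (M:ℤ), f (i + 1) = ∑ i ∈ Finset.Icc (1:ℤ) (M:ℤ), f i := by
  have hmap : (Finset.range M).map ⟨fun k : ℕ => (k : ℤ) + 1, fun x y hxy => by simpa using hxy⟩
      = Finset.Icc (1:ℤ) (M:ℤ) := by
    ext m
    simp only [Finset.mem_map, Finset.mem_range, Finset.mem_Icc, Function.Embedding.coeFn_mk]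
    constructor
    · rintro ⟨k, hk, rfl⟩; show 1 ≤ (k:ℤ) + 1 ∧ (k:ℤ) + 1 ≤ M; omega
    · intro hm; exact ⟨(m - 1).toNat, by omega, by show (((m - 1).toNat : ℕ) : ℤ) + 1 = m; omega⟩
  have key : ∀ g : ℤ → ℝ, ∑ i ∈ Finset.Icc (1:ℤ) (M:ℤ), g i = ∑ k ∈ Finset.range M, g ((k:ℤ)+1) := by
    intro g; rw [← hmap, Finset.sum_map]; rfl
  have k1 := key (fun i => f (i + 1))
  have k2 := key f
  rw [k1, k2]
  have tel := Finset.sum_range_sub (f := fun k : ℕ => f ((k:ℤ)+1)) M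
  push_cast at tel
  rw [Finset.sum_sub_distrib] at tel
  have hper : f ((M:ℤ) + 1) = f 1 := by rw [add_comm]; exact hf 1
  linarith [tel, hper]

variable {M : ℕ} {h : ℝ} {a b : ℤ → ℝ}

lemma sum_mul_comm (M : ℕ) (f g : ℤ → ℝ) :
    ∑ i ∈ Finset.Icc (1:ℤ) (M:ℤ), f i * g i = ∑ i ∈ Finset.Icc (1:ℤ) (M:ℤ), g i * f i :=
  Finset.sum_congr rfl fun i _ => mul_comm _ _

lemma shift1 (pa : Periodic M a) (pb : Periodic M b) :
    ∑ i ∈ Finset.Icc (1:ℤ) (M:ℤ), a (i+1) * b (i+1) = ∑ i ∈ Finset.Icc (1:ℤ) (M:ℤ), a i * b i := by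
  have := sum_shift (fun j => a j * b j) (fun i => by simp only; rw [pa, pb])
  simpa using this

lemma shift2 (pa : Periodic M a) (pb : Periodic M b) :
    ∑ i ∈ Finset.Icc (1:ℤ) (M:ℤ), a i * b i = ∑ i ∈ Finset.Icc (1:ℤ) (M:ℤ), a (i-1) * b (i-1) := by
  have := sum_shift (fun j => a (j-1) * b (j-1)) (fun i => by
    simp only
    rw [show i + (M:ℤ) - 1 = (i-1) + M by ring, pa, pb])
  simp only [add_sub_cancel_right] at this
  exact this

lemma shift3 (pa : Periodic M a) (pb : Periodic M b) :
    ∑ i ∈ Finset.Icc (1:ℤ) (M:ℤ), a (i+1) * b i = ∑ i ∈ Finset.Icc (1:ℤ) (M:ℤ), a i * b (i-1) := by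
  have := sum_shift (fun j => a j * b (j-1)) (fun i => by
    simp only
    rw [pa, show i + (M:ℤ) - 1 = (i-1) + M by ring, pb])
  simp only [add_sub_cancel_right] at this
  exact this

lemma shift4 (pa : Periodic M a) (pb : Periodic M b) :
    ∑ i ∈ Finset.Icc (1:ℤ) (M:ℤ), a i * b (i+1) = ∑ i ∈ Finset.Icc (1:ℤ) (M:ℤ), a (i-1) * b i := by
  have := sum_shift (fun j => a (j-1) * b j) (fun i => by
    simp only
    rw [show i + (M:ℤ) - 1 = (i-1) + M by ring, pa, pb])
  simp only [add_sub_cancel_right] at this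
  exact this

lemma byparts (hh : h ≠ 0) (pa : Periodic M a) (pb : Periodic M b) :
    ∑ i ∈ Finset.Icc (1:ℤ) (M:ℤ), dxx h a i * b i
      = - ∑ i ∈ Finset.Icc (1:ℤ) (M:ℤ), dxm h a i * dxm h b i := by
  have t3 := shift3 pa pb
  have t2 := shift2 pa pb
  have e : ∑ i ∈ Finset.Icc (1:ℤ) (M:ℤ), dxx h a i * b i
        + ∑ i ∈ Finset.Icc (1:ℤ) (M:ℤ), dxm h a i * dxm h b i
      = (1/h^2) * ∑ i ∈ Finset.Icc (1:ℤ) (M:ℤ), a (i+1) * b i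
        - (1/h^2) * ∑ i ∈ Finset.Icc (1:ℤ) (M:ℤ), a i * b (i-1)
        - ((1/h^2) * ∑ i ∈ Finset.Icc (1:ℤ) (M:ℤ), a i * b i
           - (1/h^2) * ∑ i ∈ Finset.Icc (1:ℤ) (M:ℤ), a (i-1) * b (i-1)) := by
    simp only [Finset.mul_sum, ← Finset.sum_add_distrib, ← Finset.sum_sub_distrib]
    exact Finset.sum_congr rfl fun i _ => by simp only [dxx, dxm]; field_simp; ring
  linear_combination e + (1/h^2)*t3 - (1/h^2)*t2

lemma skew (hh : h ≠ 0) (pa : Periodic M a) (pb : Periodic M b) :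
    ∑ i ∈ Finset.Icc (1:ℤ) (M:ℤ), Dx h a i * b i
      = - ∑ i ∈ Finset.Icc (1:ℤ) (M:ℤ), a i * Dx h b i := by
  have t3 := shift3 pa pb
  have t4 := shift4 pa pb
  have e : ∑ i ∈ Finset.Icc (1:ℤ) (M:ℤ), Dx h a i * b i
        + ∑ i ∈ Finset.Icc (1:ℤ) (M:ℤ), a i * Dx h b i
      = (1/(2*h)) * ∑ i ∈ Finset.Icc (1:ℤ) (M:ℤ), a (i+1) * b i
        - (1/(2*h)) * ∑ i ∈ Finset.Icc (1:ℤ) (M:ℤ), a i * b (i-1)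
        + ((1/(2*h)) * ∑ i ∈ Finset.Icc (1:ℤ) (M:ℤ), a i * b (i+1)
           - (1/(2*h)) * ∑ i ∈ Finset.Icc (1:ℤ) (M:ℤ), a (i-1) * b i) := by
    simp only [Finset.mul_sum, ← Finset.sum_add_distrib, ← Finset.sum_sub_distrib]
    exact Finset.sum_congr rfl fun i _ => by simp only [Dx]; field_simp; ring
  linear_combination e + (1/(2*h))*t3 + (1/(2*h))*t4

lemma dxxDx (hh : h ≠ 0) (pa : Periodic M a) (pb : Periodic M b) :
    ∑ i ∈ Finset.Icc (1:ℤ) (M:ℤ), dxx h a i * Dx h b i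
      = - ∑ i ∈ Finset.Icc (1:ℤ) (M:ℤ), dxx h b i * Dx h a i := by
  have t1 := shift1 pa pb
  have t2 := shift2 pa pb
  have t3 := shift3 pa pb
  have t4 := shift4 pa pb
  have e : ∑ i ∈ Finset.Icc (1:ℤ) (M:ℤ), dxx h a i * Dx h b i
        + ∑ i ∈ Finset.Icc (1:ℤ) (M:ℤ), dxx h b i * Dx h a i
      = (1/h^3) * ∑ i ∈ Finset.Icc (1:ℤ) (M:ℤ), a (i+1) * b (i+1)
        - (1/h^3) * ∑ i ∈ Finset.Icc (1:ℤ) (M:ℤ), a (i-1) * b (i-1)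
        - ((1/h^3) * ∑ i ∈ Finset.Icc (1:ℤ) (M:ℤ), a i * b (i+1)
           - (1/h^3) * ∑ i ∈ Finset.Icc (1:ℤ) (M:ℤ), a i * b (i-1))
        - ((1/h^3) * ∑ i ∈ Finset.Icc (1:ℤ) (M:ℤ), a (i+1) * b i
           - (1/h^3) * ∑ i ∈ Finset.Icc (1:ℤ) (M:ℤ), a (i-1) * b i) := by
    simp only [Finset.mul_sum, ← Finset.sum_add_distrib, ← Finset.sum_sub_distrib]
    exact Finset.sum_congr rfl fun i _ => by simp only [dxx, Dx]; field_simp; ring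
  linear_combination e + (1/h^3)*t1 + (1/h^3)*t2 - (1/h^3)*t3 - (1/h^3)*t4

lemma Dxww (hh : h ≠ 0) (pw : Periodic M a) :
    ∑ i ∈ Finset.Icc (1:ℤ) (M:ℤ), Dx h a i * a i = 0 := by
  have sk := skew hh pw pw
  have cm := sum_mul_comm M (Dx h a) a
  linarith [sk, cm]

lemma psiW (hh : h ≠ 0) (pa : Periodic M a) (pw : Periodic M b) :
    ∑ i ∈ Finset.Icc (1:ℤ) (M:ℤ), psi h a b i * b i = 0 := by
  have pab : Periodic M (fun j => a j * b j) := fun i => by simp only; rw [pa, pw]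
  have sk := skew hh pab pw
  have e : ∑ i ∈ Finset.Icc (1:ℤ) (M:ℤ), psi h a b i * b i
      = (1/3) * ∑ i ∈ Finset.Icc (1:ℤ) (M:ℤ), (a i * b i * Dx h b i)
        + (1/3) * ∑ i ∈ Finset.Icc (1:ℤ) (M:ℤ), (Dx h (fun j => a j * b j) i * b i) := by
    simp only [Finset.mul_sum, ← Finset.sum_add_distrib]
    exact Finset.sum_congr rfl fun i _ => by simp only [psi]; ring
  linear_combination e + (1/3) * sk

lemma DxvU (hh : h ≠ 0) (pu : Periodic M a) (pv : Periodic M b)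
    (ra : ∀ i, b i = dxx h a i - h ^ 2 / 12 * dxx h b i) :
    ∑ i ∈ Finset.Icc (1:ℤ) (M:ℤ), Dx h b i * a i = 0 := by
  have sk := skew hh pv pu
  have c1 : ∑ i ∈ Finset.Icc (1:ℤ) (M:ℤ), dxx h a i * Dx h a i = 0 := by
    have := dxxDx hh pu pu; linarith
  have c2 : ∑ i ∈ Finset.Icc (1:ℤ) (M:ℤ), dxx h b i * Dx h b i = 0 := by
    have := dxxDx hh pv pv; linarith
  have c3 : ∑ i ∈ Finset.Icc (1:ℤ) (M:ℤ), b i * Dx h b i = 0 := by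
    have sk2 := skew hh pv pv
    have cm := sum_mul_comm M (Dx h b) b
    linarith
  have c4 : ∑ i ∈ Finset.Icc (1:ℤ) (M:ℤ), dxx h a i * Dx h b i = 0 := by
    have e : ∑ i ∈ Finset.Icc (1:ℤ) (M:ℤ), dxx h a i * Dx h b i
        = ∑ i ∈ Finset.Icc (1:ℤ) (M:ℤ), b i * Dx h b i
          + h^2/12 * ∑ i ∈ Finset.Icc (1:ℤ) (M:ℤ), dxx h b i * Dx h b i := by
      simp only [Finset.mul_sum, ← Finset.sum_add_distrib]
      refine Finset.sum_congr rfl fun i _ => ?_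
      have e2 : dxx h a i = b i + h ^ 2 / 12 * dxx h b i := by linarith [ra i]
      rw [e2]; ring
    rw [e, c3, c2]; ring
  have c5 : ∑ i ∈ Finset.Icc (1:ℤ) (M:ℤ), dxx h b i * Dx h a i = 0 := by
    have := dxxDx hh pv pu
    rw [c4] at this; linarith
  have c6 : ∑ i ∈ Finset.Icc (1:ℤ) (M:ℤ), b i * Dx h a i = 0 := by
    have e : ∑ i ∈ Finset.Icc (1:ℤ) (M:ℤ), b i * Dx h a i
        = ∑ i ∈ Finset.Icc (1:ℤ) (M:ℤ), dxx h a i * Dx h a i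
          - h^2/12 * ∑ i ∈ Finset.Icc (1:ℤ) (M:ℤ), dxx h b i * Dx h a i := by
      simp only [Finset.mul_sum, ← Finset.sum_sub_distrib]
      refine Finset.sum_congr rfl fun i _ => ?_
      rw [ra i]; ring
    rw [e, c1, c5]; ring
  rw [sk, c6]; ring

lemma pairB {ua va ub vb : ℤ → ℝ} (hh : h ≠ 0)
    (pua : Periodic M ua) (pva : Periodic M va) (pub : Periodic M ub) (pvb : Periodic M vb)
    (ra : ∀ i, va i = dxx h ua i - h ^ 2 / 12 * dxx h va i)
    (rb : ∀ i, vb i = dxx h ub i - h ^ 2 / 12 * dxx h vb i) :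
    ∑ i ∈ Finset.Icc (1:ℤ) (M:ℤ), va i * ub i
      = -(∑ i ∈ Finset.Icc (1:ℤ) (M:ℤ), dxm h ua i * dxm h ub i
          + h ^ 2 / 12 * ∑ i ∈ Finset.Icc (1:ℤ) (M:ℤ), va i * vb i
          - h ^ 4 / 144 * ∑ i ∈ Finset.Icc (1:ℤ) (M:ℤ), dxm h va i * dxm h vb i) := by
  have s1 : ∑ i ∈ Finset.Icc (1:ℤ) (M:ℤ), va i * ub i
      = ∑ i ∈ Finset.Icc (1:ℤ) (M:ℤ), dxx h ua i * ub i
        - h^2/12 * ∑ i ∈ Finset.Icc (1:ℤ) (M:ℤ), dxx h va i * ub i := by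
    simp only [Finset.mul_sum, ← Finset.sum_sub_distrib]
    exact Finset.sum_congr rfl fun i _ => by rw [ra i]; ring
  have bp1 := byparts hh pua pub
  have bp2 := byparts hh pva pub
  have s2 : ∑ i ∈ Finset.Icc (1:ℤ) (M:ℤ), dxx h ub i * va i
      = ∑ i ∈ Finset.Icc (1:ℤ) (M:ℤ), va i * vb i
        + h^2/12 * ∑ i ∈ Finset.Icc (1:ℤ) (M:ℤ), dxx h vb i * va i := by
    simp only [Finset.mul_sum, ← Finset.sum_add_distrib]
    refine Finset.sum_congr rfl fun i _ => ?_
    have e2 : dxx h ub i = vb i + h ^ 2 / 12 * dxx h vb i := by linarith [rb i]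
    rw [e2]; ring
  have bp3 := byparts hh pub pva
  have bp4 := byparts hh pvb pva
  have cm1 := sum_mul_comm M (dxm h ub) (dxm h va)
  have cm2 := sum_mul_comm M (dxm h vb) (dxm h va)
  linear_combination s1 + bp1 - (h^2/12)*bp2
    + (h^2/12)*(-cm1 + bp3 - s2 - (h^2/12)*bp4 + (h^2/12)*cm2)


/-- Theorem 4.1, first-level energy identity (21). -/
theorem first_level_energy (M N : ℕ) (h τ μ γ κ ν : ℝ) (u v : ℕ → ℤ → ℝ)
    (hM : 0 < M) (hN : 0 < N) (hh : 0 < h) (hτ : 0 < τ)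
    (hscheme : SatisfiesScheme M N h τ μ γ κ ν u v) :
    1 / 2 * ((nrm M h (u 1)) ^ 2 + (nrm M h (u 0)) ^ 2)
      + μ / 2 * (((snorm M h (u 1)) ^ 2 + (snorm M h (u 0)) ^ 2)
          + h ^ 2 / 12 * ((nrm M h (v 1)) ^ 2 + (nrm M h (v 0)) ^ 2)
          - h ^ 4 / 144 * ((snorm M h (v 1)) ^ 2 + (snorm M h (v 0)) ^ 2))
      + ν * τ * ((snorm M h (half (u 0) (u 1))) ^ 2
          + h ^ 2 / 12 * (nrm M h (half (v 0) (v 1))) ^ 2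
          - h ^ 4 / 144 * (snorm M h (half (v 0) (v 1))) ^ 2)
    = (nrm M h (u 0)) ^ 2 + μ * (snorm M h (u 0)) ^ 2
        + μ * h ^ 2 / 12 * (nrm M h (v 0)) ^ 2 - μ * h ^ 4 / 144 * (snorm M h (v 0)) ^ 2 := by

  obtain ⟨hper, hrel, heq1, -⟩ := hscheme
  set uh := half (u 0) (u 1) with huh
  set vh := half (v 0) (v 1) with hvh
  have hne : h ≠ 0 := ne_of_gt hh
  have pu0 : Periodic M (u 0) := (hper 0 (Nat.zero_le N)).1
  have pv0 : Periodic M (v 0) := (hper 0 (Nat.zero_le N)).2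
  have pu1 : Periodic M (u 1) := (hper 1 hN).1
  have pv1 : Periodic M (v 1) := (hper 1 hN).2
  have rel0 := hrel 0 (Nat.zero_le N)
  have rel1 := hrel 1 hN
  have puh : Periodic M uh := fun i => by simp only [huh, half]; rw [pu0, pu1]
  have pvh : Periodic M vh := fun i => by simp only [hvh, half]; rw [pv0, pv1]
  have relh : ∀ i, vh i = dxx h uh i - h ^ 2 / 12 * dxx h vh i := by
    intro i
    have r0 := rel0 i; have r1 := rel1 i
    simp only [dxx] at r0 r1
    simp only [huh, hvh, half, dxx]
    linear_combination r0/2 + r1/2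
  have key : ∑ i ∈ Finset.Icc (1:ℤ) (M:ℤ),
      ((u 1 i - u 0 i) / τ - μ * (v 1 i - v 0 i) / τ
        + γ * (psi h (u 0) uh i - h ^ 2 / 2 * psi h (v 0) uh i)
        + κ * (Dx h uh i - h ^ 2 / 6 * Dx h vh i)
        - ν * vh i) * uh i = 0 :=
    Finset.sum_eq_zero fun i _ => by rw [heq1 i, zero_mul]
  have expand : ∑ i ∈ Finset.Icc (1:ℤ) (M:ℤ),
      ((u 1 i - u 0 i) / τ - μ * (v 1 i - v 0 i) / τ
        + γ * (psi h (u 0) uh i - h ^ 2 / 2 * psi h (v 0) uh i)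
        + κ * (Dx h uh i - h ^ 2 / 6 * Dx h vh i)
        - ν * vh i) * uh i
      = (1/τ) * ∑ i ∈ Finset.Icc (1:ℤ) (M:ℤ), (u 1 i - u 0 i) * uh i
        - (μ/τ) * ∑ i ∈ Finset.Icc (1:ℤ) (M:ℤ), (v 1 i - v 0 i) * uh i
        + γ * ∑ i ∈ Finset.Icc (1:ℤ) (M:ℤ), psi h (u 0) uh i * uh i
        - (γ * h^2/2) * ∑ i ∈ Finset.Icc (1:ℤ) (M:ℤ), psi h (v 0) uh i * uh i
        + κ * ∑ i ∈ Finset.Icc (1:ℤ) (M:ℤ), Dx h uh i * uh i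
        - (κ * h^2/6) * ∑ i ∈ Finset.Icc (1:ℤ) (M:ℤ), Dx h vh i * uh i
        - ν * ∑ i ∈ Finset.Icc (1:ℤ) (M:ℤ), vh i * uh i := by
    simp only [Finset.mul_sum, ← Finset.sum_add_distrib, ← Finset.sum_sub_distrib]
    exact Finset.sum_congr rfl fun i _ => by ring
  have hA : ∑ i ∈ Finset.Icc (1:ℤ) (M:ℤ), (u 1 i - u 0 i) * uh i
      = (1/2) * ∑ i ∈ Finset.Icc (1:ℤ) (M:ℤ), u 1 i * u 1 i
        - (1/2) * ∑ i ∈ Finset.Icc (1:ℤ) (M:ℤ), u 0 i * u 0 i := by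
    simp only [Finset.mul_sum, ← Finset.sum_sub_distrib]
    exact Finset.sum_congr rfl fun i _ => by simp only [huh, half]; ring
  have splitB : ∑ i ∈ Finset.Icc (1:ℤ) (M:ℤ), (v 1 i - v 0 i) * uh i
      = (1/2) * ∑ i ∈ Finset.Icc (1:ℤ) (M:ℤ), v 1 i * u 1 i
        + (1/2) * ∑ i ∈ Finset.Icc (1:ℤ) (M:ℤ), v 1 i * u 0 i
        - (1/2) * ∑ i ∈ Finset.Icc (1:ℤ) (M:ℤ), v 0 i * u 1 i
        - (1/2) * ∑ i ∈ Finset.Icc (1:ℤ) (M:ℤ), v 0 i * u 0 i := by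
    simp only [Finset.mul_sum, ← Finset.sum_add_distrib, ← Finset.sum_sub_distrib]
    exact Finset.sum_congr rfl fun i _ => by simp only [huh, half]; ring
  have b11 := pairB hne pu1 pv1 pu1 pv1 rel1 rel1
  have b10 := pairB hne pu1 pv1 pu0 pv0 rel1 rel0
  have b01 := pairB hne pu0 pv0 pu1 pv1 rel0 rel1
  have b00 := pairB hne pu0 pv0 pu0 pv0 rel0 rel0
  have bhh := pairB hne puh pvh puh pvh relh relh
  have hps1 := psiW hne pu0 puh
  have hps2 := psiW hne pv0 puh
  have hDw := Dxww hne puh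
  have hDv := DxvU hne puh pvh relh
  have cmD := sum_mul_comm M (dxm h (u 1)) (dxm h (u 0))
  have cmV := sum_mul_comm M (v 1) (v 0)
  have cmW := sum_mul_comm M (dxm h (v 1)) (dxm h (v 0))
  rw [expand] at key
  rw [hA, splitB, b11, b10, b01, b00, bhh, hps1, hps2, hDw, hDv, cmD, cmV, cmW] at key
  have ipnn : ∀ w : ℤ → ℝ, 0 ≤ ip M h w w := fun w =>
    mul_nonneg hh.le (Finset.sum_nonneg fun i _ => mul_self_nonneg _)
  have dipnn : ∀ w : ℤ → ℝ, 0 ≤ dip M h w w := fun w =>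
    mul_nonneg hh.le (Finset.sum_nonneg fun i _ => mul_self_nonneg _)
  have hn : ∀ w : ℤ → ℝ, nrm M h w ^ 2 = ip M h w w := fun w => Real.sq_sqrt (ipnn w)
  have hs : ∀ w : ℤ → ℝ, snorm M h w ^ 2 = dip M h w w := fun w => Real.sq_sqrt (dipnn w)
  simp only [hn, hs, ip, dip]
  have hτne : τ ≠ 0 := ne_of_gt hτ
  linear_combination (norm := (field_simp; ring1)) (h*τ) * key


end BBMB
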